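/- Let k ∈ G commute with all J_j and with a, f ∈ L_-, and suppose conjugation by k preserves L_±. If V(t)f⁻¹ = M⁻¹E and V(t)(kfk⁻¹)⁻¹ = M̃⁻¹Ẽ are the unique L_- × L_+ factorizations, then M̃ = kMk⁻¹, Ẽ = kEk⁻¹, the solutions satisfy u_{kfk⁻¹} = k u_f k⁻¹, and ⟨M̃ J_j M̃⁻¹, a⟩ = ⟨M J_j M⁻¹, a⟩ for any ad-invariant bilinear form ⟨·,·⟩. -/

import Mathlib

attribute [local instance] Matrix.normedAddCommGroup Matrix.normedSpace

/-- Square matrices over `ℂ`, standing in for the loop algebra. -/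
abbrev MxC (n : ℕ) := Matrix (Fin n) (Fin n) ℂ

/-- If `k` commutes with all `J_j`, with `a` and with `V(t)`, and conjugation by
`k` preserves `L₊` and `L₋`, then from the factorizations `V f⁻¹ = M⁻¹ E` and
`V (kfk⁻¹)⁻¹ = M̃⁻¹ Ẽ` one gets `M̃ = kMk⁻¹`, `Ẽ = kEk⁻¹`, the solutions
(defined by `E_{t₁}E⁻¹ = J₁ + u`) satisfy `u_{kfk⁻¹} = k u_f k⁻¹`, and
`⟨M̃ J_j M̃⁻¹, a⟩ = ⟨M J_j M⁻¹, a⟩` for any ad-invariant bilinear form. -/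
theorem conjugation_symmetry_of_scattering {n : ℕ}
    (Lp Lm : Subgroup (MxC n)ˣ)
    (htriv : ∀ x, x ∈ Lp → x ∈ Lm → x = 1)
    (k f : (MxC n)ˣ) (hf : f ∈ Lm)
    (hconjp : ∀ x, x ∈ Lp → k * x * k⁻¹ ∈ Lp)
    (hconjm : ∀ x, x ∈ Lm → k * x * k⁻¹ ∈ Lm)
    (J : ℕ → MxC n) (a : MxC n)
    (hkJ : ∀ j, (k : MxC n) * J j = J j * (k : MxC n))
    (hka : (k : MxC n) * a = a * (k : MxC n))
    (V M M' E E' : ℝ → (MxC n)ˣ)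
    (hkV : ∀ t, k * V t = V t * k)
    (hmem : ∀ t, M t ∈ Lm ∧ M' t ∈ Lm ∧ E t ∈ Lp ∧ E' t ∈ Lp)
    (hfac : ∀ t, V t * f⁻¹ = (M t)⁻¹ * E t)
    (hfac' : ∀ t, V t * (k * f * k⁻¹)⁻¹ = (M' t)⁻¹ * E' t)
    (hEdiff : Differentiable ℝ (fun t => ((E t : MxC n))))
    (u u' : ℝ → MxC n)
    (hu : ∀ t, deriv (fun s => ((E s : MxC n))) t = (J 1 + u t) * (E t : MxC n))
    (hu' : ∀ t, deriv (fun s => ((E' s : MxC n))) t = (J 1 + u' t) * (E' t : MxC n))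
    (B : MxC n →ₗ[ℂ] MxC n →ₗ[ℂ] ℂ)
    (hB : ∀ (g : (MxC n)ˣ) (X Y : MxC n),
      B ((g : MxC n) * X * (↑g⁻¹ : MxC n)) ((g : MxC n) * Y * (↑g⁻¹ : MxC n)) = B X Y) :
    (∀ t, M' t = k * M t * k⁻¹ ∧ E' t = k * E t * k⁻¹) ∧
    (∀ t, u' t = (k : MxC n) * u t * (↑k⁻¹ : MxC n)) ∧
    (∀ (t : ℝ) (j : ℕ),
      B ((↑(M' t) : MxC n) * J j * (↑(M' t)⁻¹ : MxC n)) a =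
        B ((↑(M t) : MxC n) * J j * (↑(M t)⁻¹ : MxC n)) a) := by
  -- Part 1: uniqueness of the Birkhoff-type factorization.
  have hpart1 : ∀ t, M' t = k * M t * k⁻¹ ∧ E' t = k * E t * k⁻¹ := by
    intro t
    have hNm : k * M t * k⁻¹ ∈ Lm := hconjm _ (hmem t).1
    have hFp : k * E t * k⁻¹ ∈ Lp := hconjp _ (hmem t).2.2.1
    have hfac2 : V t * (k * f * k⁻¹)⁻¹ = (k * M t * k⁻¹)⁻¹ * (k * E t * k⁻¹) := by
      have h1 : V t * (k * f * k⁻¹)⁻¹ = k * (V t * f⁻¹) * k⁻¹ := by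
        have hv := hkV t
        calc V t * (k * f * k⁻¹)⁻¹ = (V t * k) * (f⁻¹ * k⁻¹) := by group
          _ = (k * V t) * (f⁻¹ * k⁻¹) := by rw [hv]
          _ = k * (V t * f⁻¹) * k⁻¹ := by group
      rw [h1, hfac t]
      group
    have hkey : M' t * (k * M t * k⁻¹)⁻¹ = E' t * (k * E t * k⁻¹)⁻¹ := by
      have h2 : (M' t)⁻¹ * E' t = (k * M t * k⁻¹)⁻¹ * (k * E t * k⁻¹) := by
        rw [← hfac' t, hfac2]
      have h3 : E' t = M' t * ((k * M t * k⁻¹)⁻¹ * (k * E t * k⁻¹)) := by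
        rw [← h2]; group
      rw [h3]; group
    have hone : E' t * (k * E t * k⁻¹)⁻¹ = 1 := by
      apply htriv
      · exact mul_mem (hmem t).2.2.2 (inv_mem hFp)
      · rw [← hkey]; exact mul_mem (hmem t).2.1 (inv_mem hNm)
    refine ⟨?_, mul_inv_eq_one.mp hone⟩
    have : M' t * (k * M t * k⁻¹)⁻¹ = 1 := by rw [hkey, hone]
    exact mul_inv_eq_one.mp this
  refine ⟨hpart1, ?_, ?_⟩
  · -- Part 2: u' = k u k⁻¹.
    intro t
    have hE'val : (↑(E' t) : MxC n) = (k : MxC n) * (E t : MxC n) * (↑k⁻¹ : MxC n) := by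
      rw [(hpart1 t).2]; simp [Units.val_mul]
    -- conjugation as a continuous linear map
    let l : MxC n →ₗ[ℝ] MxC n :=
      (LinearMap.mulLeft ℝ ((k : MxC n))).comp (LinearMap.mulRight ℝ ((↑k⁻¹ : MxC n)))
    let L : MxC n →L[ℝ] MxC n := LinearMap.toContinuousLinearMap l
    have hLapp : ∀ X, L X = (k : MxC n) * (X * (↑k⁻¹ : MxC n)) := fun X => rfl
    have hEfun : (fun s => ((E' s : MxC n))) = fun s => L ((E s : MxC n)) := by
      funext s
      rw [(hpart1 s).2, hLapp]
      simp [Units.val_mul, mul_assoc]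
    have hder : deriv (fun s => ((E' s : MxC n))) t
        = (k : MxC n) * ((deriv (fun s => ((E s : MxC n))) t) * (↑k⁻¹ : MxC n)) := by
      rw [hEfun]
      have h := ((L.hasFDerivAt (x := ((E t : MxC n)))).comp_hasDerivAt t (hEdiff t).hasDerivAt).deriv
      exact h.trans (hLapp _)
    have hEq : (J 1 + u' t) * ((E' t : MxC n))
        = (J 1 + (k : MxC n) * u t * (↑k⁻¹ : MxC n)) * ((E' t : MxC n)) := by
      rw [← hu' t, hder, hu t, hE'val]
      symm
      calc (J 1 + (k : MxC n) * u t * (↑k⁻¹ : MxC n)) *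
              ((k : MxC n) * (E t : MxC n) * (↑k⁻¹ : MxC n))
          = J 1 * (k : MxC n) * ((E t : MxC n) * (↑k⁻¹ : MxC n)) +
              (k : MxC n) * u t * (((↑k⁻¹ : MxC n) * (k : MxC n)) *
                ((E t : MxC n) * (↑k⁻¹ : MxC n))) := by noncomm_ring
        _ = (k : MxC n) * ((J 1 + u t) * (E t : MxC n) * (↑k⁻¹ : MxC n)) := by
            rw [k.inv_mul, ← hkJ 1]; noncomm_ring
    have h2 := congrArg (fun X => X * (↑(E' t)⁻¹ : MxC n)) hEq
    simp only [mul_assoc, Units.mul_inv, mul_one] at h2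
    rw [← mul_assoc] at h2
    exact add_left_cancel h2
  · -- Part 3: ad-invariance.
    intro t j
    have hinvJ : (↑k⁻¹ : MxC n) * J j = J j * (↑k⁻¹ : MxC n) :=
      (Commute.units_inv_left (hkJ j))
    have ha : (k : MxC n) * a * (↑k⁻¹ : MxC n) = a := by
      rw [hka, mul_assoc, Units.mul_inv, mul_one]
    have hmid : ∀ Z : MxC n, (↑k⁻¹ : MxC n) * (J j * ((k : MxC n) * Z)) = J j * Z := by
      intro Z
      calc (↑k⁻¹ : MxC n) * (J j * ((k : MxC n) * Z))
          = ((↑k⁻¹ : MxC n) * J j * (k : MxC n)) * Z := by noncomm_ring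
        _ = J j * Z := by rw [hinvJ, mul_assoc (J j), Units.inv_mul, mul_one]
    have hX : (↑(M' t) : MxC n) * J j * (↑(M' t)⁻¹ : MxC n)
        = (k : MxC n) * ((↑(M t) : MxC n) * J j * (↑(M t)⁻¹ : MxC n)) * (↑k⁻¹ : MxC n) := by
      rw [(hpart1 t).1]
      simp only [mul_inv_rev, inv_inv, Units.val_mul]
      simp only [mul_assoc]
      rw [hmid]
    calc B ((↑(M' t) : MxC n) * J j * (↑(M' t)⁻¹ : MxC n)) a
        = B ((k : MxC n) * ((↑(M t) : MxC n) * J j * (↑(M t)⁻¹ : MxC n)) * (↑k⁻¹ : MxC n))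
            ((k : MxC n) * a * (↑k⁻¹ : MxC n)) := by rw [hX, ha]
      _ = B ((↑(M t) : MxC n) * J j * (↑(M t)⁻¹ : MxC n)) a := hB k _ a
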